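/- For each natural number n ≥ 5, there exists a minimal deterministic finite automaton A_n with n states over an alphabet of size 5 such that the number of J-classes of the transition semigroup T(A_n) is at least (n−4)^{n−4}; the same lower bound holds for the number of R-classes and the number of L-classes of T(A_n). -/

import Mathlib

/-- (Total) transformations on `Q`, with left-to-right composition:
`q·(fg) = (q·f)·g`. -/
def Transf (Q : Type*) : Type _ := Q → Q

instance {Q : Type*} : Mul (Transf Q) := ⟨fun f g => fun q => g (f q)⟩

instance {Q : Type*} : Semigroup (Transf Q) where
  mul_assoc _ _ _ := rfl

/-- A deterministic finite automaton is minimal if every state is reachable from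
the start state and no two distinct states accept the same language. -/
def DFA.IsMinimal {α σ : Type*} (M : DFA α σ) : Prop :=
  (∀ q : σ, ∃ w : List α, M.evalFrom M.start w = q) ∧
  (∀ p q : σ, (∀ w : List α, (M.evalFrom p w ∈ M.accept ↔ M.evalFrom q w ∈ M.accept)) → p = q)

/-- The transition semigroup of a DFA: the transformation semigroup on the state
set generated by the actions of the letters. -/
def transitionSemigroup {α σ : Type*} (M : DFA α σ) : Subsemigroup (Transf σ) :=
  Subsemigroup.closure {f : Transf σ | ∃ a : α, f = fun q => M.step q a}

section Green
variable {S : Type*} [Semigroup S]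

/-- The right ideal `s·S¹` as a subset of `S¹ = WithOne S`. -/
def rIdeal (s : S) : Set (WithOne S) := {x | ∃ z : WithOne S, x = (s : WithOne S) * z}

/-- The left ideal `S¹·s` as a subset of `S¹`. -/
def lIdeal (s : S) : Set (WithOne S) := {x | ∃ z : WithOne S, x = z * (s : WithOne S)}

/-- The two-sided ideal `S¹·s·S¹` as a subset of `S¹`. -/
def jIdeal (s : S) : Set (WithOne S) :=
  {x | ∃ z₁ z₂ : WithOne S, x = z₁ * (s : WithOne S) * z₂}

/-- Green's preorder `s ≤_R t` : `sS¹ ⊆ tS¹`. -/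
def leR (s t : S) : Prop := rIdeal s ⊆ rIdeal t

/-- Green's preorder `s ≤_L t` : `S¹s ⊆ S¹t`. -/
def leL (s t : S) : Prop := lIdeal s ⊆ lIdeal t

/-- Green's preorder `s ≤_J t` : `S¹sS¹ ⊆ S¹tS¹`. -/
def leJ (s t : S) : Prop := jIdeal s ⊆ jIdeal t

/-- Green's strict order `s <_R t`. -/
def ltR (s t : S) : Prop := leR s t ∧ ¬ leR t s

/-- Green's strict order `s <_L t`. -/
def ltL (s t : S) : Prop := leL s t ∧ ¬ leL t s

/-- Green's strict order `s <_J t`. -/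
def ltJ (s t : S) : Prop := leJ s t ∧ ¬ leJ t s

/-- An `R`-chain `(s 0, …, s (ℓ-1))` of length `ℓ`. -/
def IsRChain (ℓ : ℕ) (s : ℕ → S) : Prop := ∀ i : ℕ, i + 1 < ℓ → ltR (s (i + 1)) (s i)

/-- An `L`-chain `(s 0, …, s (ℓ-1))` of length `ℓ`. -/
def IsLChain (ℓ : ℕ) (s : ℕ → S) : Prop := ∀ i : ℕ, i + 1 < ℓ → ltL (s (i + 1)) (s i)

/-- A `J`-chain `(s 0, …, s (ℓ-1))` of length `ℓ`. -/
def IsJChain (ℓ : ℕ) (s : ℕ → S) : Prop := ∀ i : ℕ, i + 1 < ℓ → ltJ (s (i + 1)) (s i)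

end Green

section Green
variable {S : Type*} [Semigroup S]

/-- Green's relation `R`. -/
def eqvR (s t : S) : Prop := leR s t ∧ leR t s

/-- Green's relation `L`. -/
def eqvL (s t : S) : Prop := leL s t ∧ leL t s

/-- Green's relation `J`. -/
def eqvJ (s t : S) : Prop := leJ s t ∧ leJ t s

end Green


/-! ### Auxiliary construction -/
section Construction
open Function Fin.NatCast

def a0 (m : ℕ) [NeZero m] : Function.End (Fin m) := fun i => i + 1
def b0 (m : ℕ) [NeZero m] : Function.End (Fin m) := ⇑(Equiv.swap (0 : Fin m) 1)
def d0 (m : ℕ) [NeZero m] : Function.End (Fin m) := fun x => if x = 0 then 1 else x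

/-- coercion of a perm into `Function.End`. -/
def pm {m : ℕ} (σ : Equiv.Perm (Fin m)) : Function.End (Fin m) := ⇑σ

theorem pm_mul {m : ℕ} (σ τ : Equiv.Perm (Fin m)) : pm (σ * τ) = pm σ * pm τ := rfl

theorem pm_one {m : ℕ} : pm (1 : Equiv.Perm (Fin m)) = 1 := rfl

theorem pm_pow_mem {m : ℕ} (M : Submonoid (Function.End (Fin m)))
    (σ : Equiv.Perm (Fin m)) (h : pm σ ∈ M) : ∀ j : ℕ, pm (σ ^ j) ∈ M := by
  intro j
  induction j with
  | zero => rw [pow_zero, pm_one]; exact M.one_mem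
  | succ j ih => rw [pow_succ, pm_mul]; exact M.mul_mem ih h

theorem pm_inv_mem {m : ℕ} (M : Submonoid (Function.End (Fin m)))
    (σ : Equiv.Perm (Fin m)) (h : pm σ ∈ M) : pm σ⁻¹ ∈ M := by
  have hpos : 0 < orderOf σ := orderOf_pos σ
  have : σ⁻¹ = σ ^ (orderOf σ - 1) := by
    have h1 : σ ^ (orderOf σ - 1) * σ = 1 := by
      rw [← pow_succ, Nat.sub_add_cancel hpos, pow_orderOf_eq_one]
    exact inv_eq_of_mul_eq_one_left h1
  rw [this]; exact pm_pow_mem M σ h _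

theorem perm_mem {k : ℕ} (σ : Equiv.Perm (Fin (k + 2))) :
    pm σ ∈ Submonoid.closure ({a0 (k+2), b0 (k+2), d0 (k+2)} : Set (Function.End (Fin (k+2)))) := by
  set M := Submonoid.closure ({a0 (k+2), b0 (k+2), d0 (k+2)} : Set (Function.End (Fin (k+2)))) with hM
  have hrot : pm (finRotate (k+2)) ∈ M := by
    have : pm (finRotate (k+2)) = a0 (k+2) := by
      funext i; simp [pm, a0, finRotate_succ_apply]
    rw [this]; exact Submonoid.subset_closure (by simp)
  have hswap : pm (Equiv.swap (0 : Fin (k+2)) (finRotate (k+2) 0)) ∈ M := by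
    have h0 : finRotate (k+2) (0 : Fin (k+2)) = 1 := by simp [finRotate_succ_apply]
    rw [h0]
    have : pm (Equiv.swap (0 : Fin (k+2)) 1) = b0 (k+2) := rfl
    rw [this]; exact Submonoid.subset_closure (by simp)
  have htop : σ ∈ Subgroup.closure
      ({finRotate (k+2), Equiv.swap 0 (finRotate (k+2) 0)} : Set (Equiv.Perm (Fin (k+2)))) := by
    rw [Equiv.Perm.closure_cycle_adjacent_swap isCycle_finRotate support_finRotate 0]
    trivial
  induction htop using Subgroup.closure_induction with
  | mem x hx =>
      rcases hx with h | h
      · rw [h]; exact hrot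
      · rw [Set.mem_singleton_iff] at h; rw [h]; exact hswap
  | one => rw [pm_one]; exact M.one_mem
  | mul x y hx hy ihx ihy => rw [pm_mul]; exact M.mul_mem ihx ihy
  | inv x hx ihx => exact pm_inv_mem M x ihx

/-- the map sending `i` to `j` and fixing everything else -/
def coll {m : ℕ} (i j : Fin m) : Function.End (Fin m) := fun x => if x = i then j else x

theorem coll_mem {k : ℕ} (i j : Fin (k+2)) (hij : i ≠ j) :
    coll i j ∈ Submonoid.closure ({a0 (k+2), b0 (k+2), d0 (k+2)} : Set (Function.End (Fin (k+2)))) := by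
  set M := Submonoid.closure ({a0 (k+2), b0 (k+2), d0 (k+2)} : Set (Function.End (Fin (k+2)))) with hM
  set v : Fin (k+2) := Equiv.swap 0 i j with hv
  have hvne : v ≠ 0 := by
    intro h
    have h2 : Equiv.swap (0 : Fin (k+2)) i j = Equiv.swap 0 i i := by
      rw [Equiv.swap_apply_right]; exact h
    exact hij ((Equiv.swap 0 i).injective h2).symm
  set π : Equiv.Perm (Fin (k+2)) := (Equiv.swap 0 i).trans (Equiv.swap 1 v) with hπ
  have hπi : π i = 0 := by
    simp [hπ, Equiv.trans_apply, Equiv.swap_apply_right]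
    rw [Equiv.swap_apply_of_ne_of_ne (by norm_num) (Ne.symm hvne)]
  have hπj : π j = 1 := by
    simp [hπ, Equiv.trans_apply, ← hv, Equiv.swap_apply_right]
  have key : coll i j = pm π⁻¹ * d0 (k+2) * pm π := by
    funext x
    show coll i j x = π⁻¹ (d0 (k+2) (π x))
    by_cases hx : x = i
    · subst hx
      simp [coll, hπi, d0]
      rw [show ((1:Fin (k+2))) = π j from hπj.symm]
      simp
    · have hπx : π x ≠ 0 := fun h => hx (π.injective (h.trans hπi.symm))
      simp [coll, hx, d0, hπx]
  rw [key]
  exact M.mul_mem (M.mul_mem (pm_inv_mem M π (perm_mem π)) (Submonoid.subset_closure (by simp))) (perm_mem π)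

theorem gen_mem_aux {k : ℕ} :
    ∀ (t : ℕ) (g : Fin (k+2) → Fin (k+2)), (k+2) - (Finset.image g Finset.univ).card ≤ t →
      g ∈ Submonoid.closure ({a0 (k+2), b0 (k+2), d0 (k+2)} : Set (Function.End (Fin (k+2)))) := by
  intro t
  induction t with
  | zero =>
      intro g hg
      have hle : (Finset.image g Finset.univ).card ≤ k + 2 := by
        simpa using Finset.card_le_card (Finset.subset_univ (Finset.image g Finset.univ))
      have hcard : (Finset.image g Finset.univ).card = Fintype.card (Fin (k+2)) := by
        rw [Fintype.card_fin]; omega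
      have huniv : Finset.image g Finset.univ = Finset.univ := Finset.eq_univ_of_card _ hcard
      have hsurj : Function.Surjective g := by
        intro y
        have : y ∈ Finset.image g Finset.univ := by rw [huniv]; exact Finset.mem_univ y
        simpa using this
      have hbij : Function.Bijective g := (Finite.surjective_iff_bijective).mp hsurj
      have := perm_mem (Equiv.ofBijective g hbij)
      exact this
  | succ t ih =>
      intro g hg
      by_cases hinj : Function.Injective g
      · have hbij : Function.Bijective g := (Finite.injective_iff_bijective).mp hinj
        have := perm_mem (Equiv.ofBijective g hbij)
        exact this
      · rw [Function.not_injective_iff] at hinj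
        obtain ⟨i, j, heq, hij⟩ := hinj
        have hnsurj : ¬ Function.Surjective g :=
          fun hs => (Function.not_injective_iff.mpr ⟨i, j, heq, hij⟩)
            ((Finite.surjective_iff_bijective.mp hs).injective)
        have hex : ∃ c, ∀ x, g x ≠ c := by
          unfold Function.Surjective at hnsurj; push_neg at hnsurj; exact hnsurj
        obtain ⟨c, hc⟩ := hex
        set g' : Function.End (Fin (k+2)) := Function.update g j c with hg'
        have hgij : g' i = g j := by
          rw [hg', Function.update_of_ne hij]; exact heq
        have hgx : ∀ x, x ≠ j → g' x = g x := fun x hx => Function.update_of_ne hx _ _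
        have hgj : g' j = c := Function.update_self _ _ _
        have hgeq : g = (g' * coll j i : Function.End (Fin (k+2))) := by
          funext x
          show g x = g' (coll j i x)
          by_cases hx : x = j
          · rw [hx]
            have h1 : coll j i j = i := by simp [coll]
            rw [h1, hgij]
          · have h1 : coll j i x = x := by simp [coll, hx]
            rw [h1, hgx x hx]
        have himg : Finset.image g' Finset.univ = insert c (Finset.image g Finset.univ) := by
          show Finset.image (fun x => g' x) Finset.univ = _
          ext y
          simp only [Finset.mem_image, Finset.mem_insert, Finset.mem_univ, true_and]
          constructor
          · rintro ⟨x, rfl⟩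
            by_cases hx : x = j
            · rw [hx] at *; left; rw [hgj]
            · right; exact ⟨x, (hgx x hx).symm⟩
          · rintro (rfl | ⟨x, rfl⟩)
            · exact ⟨j, hgj⟩
            · by_cases hx : x = j
              · rw [hx]; exact ⟨i, hgij⟩
              · exact ⟨x, hgx x hx⟩
        have hcard' : (Finset.image g' Finset.univ).card = (Finset.image g Finset.univ).card + 1 := by
          rw [himg]
          rw [Finset.card_insert_of_notMem (by
            simp only [Finset.mem_image, Finset.mem_univ, true_and, not_exists]
            exact hc)]
        have hle : (k+2) - (Finset.image g' Finset.univ).card ≤ t := by omega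
        rw [hgeq]
        exact mul_mem (ih g' hle) (coll_mem j i (Ne.symm hij))

theorem gen_mem (m : ℕ) [NeZero m] (g : Fin m → Fin m) :
    g ∈ Submonoid.closure ({a0 m, b0 m, d0 m} : Set (Function.End (Fin m))) := by
  rcases m with _ | m
  · exact absurd rfl (NeZero.ne' 0)
  rcases m with _ | k
  · haveI : Subsingleton (Fin (0+1)) := Fin.subsingleton_one
    have hg1 : g = (1 : Function.End (Fin (0+1))) := by
      funext x; exact Subsingleton.elim _ _
    rw [hg1]; exact one_mem _
  · exact gen_mem_aux (k+2) g (by omega)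

/-! ### The automaton on `Fin m ⊕ Fin 4` -/

theorem Transf.mul_apply {Q : Type*} (f g : Transf Q) (q : Q) : (f * g) q = g (f q) := rfl

def extO {m : ℕ} : Fin 4 → Fin m ⊕ Fin 4 := fun c => if c = 2 then .inr 0 else .inr 3
def extA {m : ℕ} : Fin 4 → Fin m ⊕ Fin 4 := fun c => if c = 0 then .inr 0 else .inr 3
def extE {m : ℕ} [NeZero m] : Fin 4 → Fin m ⊕ Fin 4 :=
  fun c => if c = 0 then .inr 1 else if c = 2 then .inl 0 else .inr 3
def extS {m : ℕ} : Fin 4 → Fin m ⊕ Fin 4 := fun c => if c = 2 then .inr 1 else .inr 3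

def oL {m : ℕ} : Transf (Fin m ⊕ Fin 4) := Sum.elim Sum.inl extO
def liftT {m : ℕ} (g : Fin m → Fin m) : Transf (Fin m ⊕ Fin 4) :=
  Sum.elim (fun i => .inl (g i)) extA
def eL {m : ℕ} [NeZero m] : Transf (Fin m ⊕ Fin 4) := Sum.elim Sum.inl extE
def sfun {m : ℕ} (g : Fin m → Fin m) : Transf (Fin m ⊕ Fin 4) :=
  Sum.elim (fun i => .inl (g i)) extS

def Ls {m : ℕ} [NeZero m] : Fin 5 → Transf (Fin m ⊕ Fin 4) := fun a =>
  if a = 0 then oL else if a = 1 then liftT (a0 m) else if a = 2 then liftT (b0 m)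
    else if a = 3 then liftT (d0 m) else eL

example {m : ℕ} : (extO (m := m) 2) = .inr 0 := rfl
example {m : ℕ} : (extO (m := m) 0) = .inr 3 := rfl
example {m : ℕ} [NeZero m] : Ls (m := m) 0 = oL := rfl
example {m : ℕ} [NeZero m] : Ls (m := m) 4 = eL := rfl
example {m : ℕ} [NeZero m] : Ls (m := m) 3 = liftT (d0 m) := rfl

def IsInv {m : ℕ} (v : Transf (Fin m ⊕ Fin 4)) : Prop :=
  v (.inr 1) = .inr 3 ∧ v (.inr 3) = .inr 3 ∧
    (∀ i : Fin m, ∃ j, v (.inl i) = .inl j) ∧ ∀ q, v q ≠ .inr 2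

theorem isInv_letters {m : ℕ} [NeZero m] (a : Fin 5) : IsInv (Ls (m := m) a) := by
  fin_cases a
  · exact ⟨rfl, rfl, fun i => ⟨i, rfl⟩, by rintro (i | c) <;> [skip; fin_cases c] <;> simp [Ls, oL, extO]⟩
  · exact ⟨rfl, rfl, fun i => ⟨_, rfl⟩, by rintro (i | c) <;> [skip; fin_cases c] <;> simp [Ls, liftT, extA]⟩
  · exact ⟨rfl, rfl, fun i => ⟨_, rfl⟩, by rintro (i | c) <;> [skip; fin_cases c] <;> simp [Ls, liftT, extA]⟩
  · exact ⟨rfl, rfl, fun i => ⟨_, rfl⟩, by rintro (i | c) <;> [skip; fin_cases c] <;> simp [Ls, liftT, extA]⟩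
  · exact ⟨rfl, rfl, fun i => ⟨_, rfl⟩, by rintro (i | c) <;> [skip; fin_cases c] <;> simp [Ls, eL, extE]⟩

theorem isInv_mul {m : ℕ} {u v : Transf (Fin m ⊕ Fin 4)} (hu : IsInv u) (hv : IsInv v) :
    IsInv (u * v) := by
  obtain ⟨hu1, hu3, hui, hug⟩ := hu
  obtain ⟨hv1, hv3, hvi, hvg⟩ := hv
  refine ⟨?_, ?_, ?_, ?_⟩
  · rw [Transf.mul_apply, hu1, hv3]
  · rw [Transf.mul_apply, hu3, hv3]
  · intro i
    obtain ⟨j, hj⟩ := hui i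
    obtain ⟨l, hl⟩ := hvi j
    exact ⟨l, by rw [Transf.mul_apply, hj, hl]⟩
  · intro q; rw [Transf.mul_apply]; exact hvg _

theorem isInv_closure {m : ℕ} [NeZero m] {v : Transf (Fin m ⊕ Fin 4)}
    (hv : v ∈ Subsemigroup.closure (Set.range (Ls (m := m)))) : IsInv v := by
  induction hv using Subsemigroup.closure_induction with
  | mem x hx => obtain ⟨a, rfl⟩ := hx; exact isInv_letters a
  | mul x y hx hy ihx ihy => exact isInv_mul ihx ihy

theorem liftT_mul {m : ℕ} (x y : Function.End (Fin m)) :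
    liftT (x * y) = liftT y * liftT x := by
  funext q
  rcases q with i | c
  · rfl
  · show extA c = liftT x (liftT y (.inr c))
    show extA c = liftT x (extA c)
    unfold extA
    by_cases hc : c = 0 <;> simp [hc, liftT, extA]

theorem liftT_mem {m : ℕ} [NeZero m] (g : Function.End (Fin m))
    (hg : g ∈ Submonoid.closure ({a0 m, b0 m, d0 m} : Set (Function.End (Fin m)))) :
    liftT g ∈ Subsemigroup.closure (Set.range (Ls (m := m))) ∨ g = 1 := by
  induction hg using Submonoid.closure_induction with
  | mem x hx =>
      left
      rcases hx with h | h | h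
      · exact Subsemigroup.subset_closure ⟨1, by rw [h]; rfl⟩
      · exact Subsemigroup.subset_closure ⟨2, by rw [h]; rfl⟩
      · exact Subsemigroup.subset_closure ⟨3, by rw [Set.mem_singleton_iff] at h; rw [h]; rfl⟩
  | one => right; rfl
  | mul x y hx hy ihx ihy =>
      rcases ihx with ihx | rfl
      · rcases ihy with ihy | rfl
        · left; rw [liftT_mul]; exact mul_mem ihy ihx
        · left; rw [mul_one]; exact ihx
      · rcases ihy with ihy | rfl
        · left; rw [one_mul]; exact ihy
        · right; rw [one_mul]

theorem sfun_decomp {m : ℕ} [NeZero m] (g : Fin m → Fin m) :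
    oL * liftT g * eL = sfun g := by
  funext q
  rcases q with i | c
  · rfl
  · fin_cases c <;> rfl

theorem sfun_one {m : ℕ} [NeZero m] :
    oL * eL = sfun (1 : Function.End (Fin m)) := by
  funext q
  rcases q with i | c
  · rfl
  · fin_cases c <;> rfl

theorem sfun_mem {m : ℕ} [NeZero m] (g : Fin m → Fin m) :
    sfun g ∈ Subsemigroup.closure (Set.range (Ls (m := m))) := by
  have hO : oL (m := m) ∈ Subsemigroup.closure (Set.range (Ls (m := m))) :=
    Subsemigroup.subset_closure ⟨0, rfl⟩
  have hE : eL (m := m) ∈ Subsemigroup.closure (Set.range (Ls (m := m))) :=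
    Subsemigroup.subset_closure ⟨4, rfl⟩
  rcases liftT_mem g (gen_mem m g) with h | h
  · rw [← sfun_decomp]; exact mul_mem (mul_mem hO h) hE
  · rw [h, ← sfun_one]; exact mul_mem hO hE

theorem sfun_gamma {m : ℕ} (g : Fin m → Fin m) : sfun g (.inr 2) = .inr 1 := rfl

theorem sfun_not_beta {m : ℕ} (g : Fin m → Fin m) (q : Fin m ⊕ Fin 4) (hq : q ≠ .inr 2) :
    (sfun g q = .inr 3) ∨ (∃ j, sfun g q = .inl j) := by
  rcases q with i | c
  · exact Or.inr ⟨g i, rfl⟩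
  · left
    fin_cases c
    · rfl
    · rfl
    · exact absurd rfl hq
    · rfl

theorem rigidB {m : ℕ} {v : Transf (Fin m ⊕ Fin 4)} (hv : IsInv v) (g h : Fin m → Fin m) :
    sfun g * v ≠ sfun h := by
  intro hEq
  have h1 : (sfun g * v) (.inr 2) = .inr 3 := by
    rw [Transf.mul_apply, sfun_gamma]; exact hv.1
  rw [hEq, sfun_gamma] at h1
  exact absurd (Sum.inr.inj h1) (by decide)

theorem rigidA {m : ℕ} {u : Transf (Fin m ⊕ Fin 4)} (hu : IsInv u) (g h : Fin m → Fin m) :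
    u * sfun g ≠ sfun h := by
  intro hEq
  have h2 : (u * sfun g) (.inr 2) = sfun g (u (.inr 2)) := rfl
  rcases sfun_not_beta g (u (.inr 2)) (hu.2.2.2 _) with h3 | ⟨j, h3⟩
  · rw [hEq, sfun_gamma] at h2
    rw [h3] at h2
    exact absurd (Sum.inr.inj h2) (by decide)
  · rw [hEq, sfun_gamma] at h2
    rw [h3] at h2
    exact Sum.inl_ne_inr h2.symm

theorem rigidC {m : ℕ} {u v : Transf (Fin m ⊕ Fin 4)} (hu : IsInv u) (hv : IsInv v)
    (g h : Fin m → Fin m) : u * sfun g * v ≠ sfun h := by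
  intro hEq
  have h2 : (u * sfun g * v) (.inr 2) = v (sfun g (u (.inr 2))) := rfl
  rw [hEq, sfun_gamma] at h2
  rcases sfun_not_beta g (u (.inr 2)) (hu.2.2.2 _) with h3 | ⟨j, h3⟩
  · rw [h3, hv.2.1] at h2
    exact absurd (Sum.inr.inj h2) (by decide)
  · rw [h3] at h2
    obtain ⟨l, hl⟩ := hv.2.2.1 j
    rw [hl] at h2
    exact Sum.inl_ne_inr h2.symm

theorem sfun_inj {m : ℕ} {g h : Fin m → Fin m} (hEq : sfun g = sfun h) : g = h := by
  funext i
  have := congrFun hEq (.inl i)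
  exact Sum.inl.inj this

/-! ### The DFA on `Fin m ⊕ Fin 4` -/

def NQ (m : ℕ) [NeZero m] : DFA (Fin 5) (Fin m ⊕ Fin 4) where
  step := fun q a => Ls a q
  start := .inr 2
  accept := {q | q = .inl 0 ∨ q = .inr 1}

theorem NQ_replA {m : ℕ} [NeZero m] (k : ℕ) (i : Fin m) :
    (NQ m).evalFrom (.inl i) (List.replicate k 1) = .inl (i + (k : Fin m)) := by
  induction k generalizing i with
  | zero => simp [DFA.evalFrom]
  | succ k ih =>
      have h1 : (NQ m).evalFrom (.inl i) (List.replicate (k+1) 1)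
          = (NQ m).evalFrom (.inl (i + 1)) (List.replicate k 1) := rfl
      rw [h1, ih]
      congr 1
      push_cast
      abel

theorem NQ_replR {m : ℕ} [NeZero m] (k : ℕ) (c : Fin 4) (hk : 1 ≤ k) :
    (NQ m).evalFrom (.inr c) (List.replicate k 1) = .inr 0 ∨
      (NQ m).evalFrom (.inr c) (List.replicate k 1) = .inr 3 := by
  have haux : ∀ (j : ℕ), ((NQ m).evalFrom (.inr 0) (List.replicate j 1) = .inr 0)
      ∧ ((NQ m).evalFrom (.inr 3) (List.replicate j 1) = .inr 3) := by
    intro j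
    induction j with
    | zero => exact ⟨rfl, rfl⟩
    | succ j ih => exact ih
  obtain ⟨k, rfl⟩ : ∃ j, k = j + 1 := ⟨k - 1, by omega⟩
  have h1 : (NQ m).evalFrom (.inr c) (List.replicate (k+1) 1)
      = (NQ m).evalFrom (Ls 1 (.inr c)) (List.replicate k 1) := rfl
  rw [h1]
  by_cases hc : c = 0
  · subst hc
    left
    have h2 : (Ls (m := m) 1) (.inr 0) = .inr 0 := rfl
    rw [h2]; exact (haux k).1
  · right
    have h2 : (Ls (m := m) 1) (.inr c) = .inr 3 := by
      show extA c = _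
      simp [extA, hc]
    rw [h2]; exact (haux k).2

theorem NQ_reach {m : ℕ} [NeZero m] (q : Fin m ⊕ Fin 4) :
    ∃ w : List (Fin 5), (NQ m).evalFrom (NQ m).start w = q := by
  rcases q with i | c
  · refine ⟨4 :: List.replicate i.val 1, ?_⟩
    have h1 : (NQ m).evalFrom (NQ m).start (4 :: List.replicate i.val 1)
        = (NQ m).evalFrom (.inl 0) (List.replicate i.val 1) := rfl
    rw [h1, NQ_replA]
    simp
  · fin_cases c
    · exact ⟨[0], rfl⟩
    · exact ⟨[0, 4], rfl⟩
    · exact ⟨[], rfl⟩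
    · exact ⟨[0, 0], rfl⟩

theorem NQ_acc_inl {m : ℕ} [NeZero m] (j : Fin m) :
    .inl j ∈ (NQ m).accept ↔ j = 0 := by
  simp [NQ]

theorem fin_add_compl {m : ℕ} [NeZero m] (i : Fin m) : i + ((m - i.val : ℕ) : Fin m) = 0 := by
  calc i + ((m - i.val : ℕ) : Fin m)
      = ((i.val : ℕ) : Fin m) + ((m - i.val : ℕ) : Fin m) := by rw [Fin.cast_val_eq_self]
    _ = ((i.val + (m - i.val) : ℕ) : Fin m) := (Nat.cast_add _ _).symm
    _ = ((m : ℕ) : Fin m) := by rw [Nat.add_sub_cancel' (le_of_lt i.isLt)]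
    _ = 0 := Fin.natCast_self m

theorem NQ_sep {m : ℕ} [NeZero m] (p q : Fin m ⊕ Fin 4)
    (H : ∀ w : List (Fin 5), ((NQ m).evalFrom p w ∈ (NQ m).accept ↔
      (NQ m).evalFrom q w ∈ (NQ m).accept)) : p = q := by
  have hmix : ∀ (i : Fin m) (c : Fin 4), ¬ (∀ w : List (Fin 5),
      ((NQ m).evalFrom (.inl i) w ∈ (NQ m).accept ↔
        (NQ m).evalFrom (.inr c) w ∈ (NQ m).accept)) := by
    intro i c hH
    have hi := hH (List.replicate (m - i.val) 1)
    rw [NQ_replA] at hi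
    have hval : i + ((m - i.val : ℕ) : Fin m) = 0 := fin_add_compl i
    rw [hval] at hi
    have hacc : Sum.inl (0 : Fin m) ∈ (NQ m).accept := by simp [NQ]
    rcases NQ_replR (m := m) (m - i.val) c (by have := i.isLt; omega) with h | h <;>
      · rw [h] at hi
        have := hi.mp hacc
        simp [NQ] at this
  rcases p with i | c <;> rcases q with j | c'
  · have hi := H (List.replicate (m - i.val) 1)
    rw [NQ_replA, NQ_replA] at hi
    have hval : i + ((m - i.val : ℕ) : Fin m) = 0 := fin_add_compl i
    rw [hval] at hi
    have hacc : Sum.inl (0 : Fin m) ∈ (NQ m).accept := by simp [NQ]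
    have hj : Sum.inl (j + ((m - i.val : ℕ) : Fin m)) ∈ (NQ m).accept := hi.mp hacc
    rw [NQ_acc_inl] at hj
    have : j + ((m - i.val : ℕ) : Fin m) = i + ((m - i.val : ℕ) : Fin m) := by rw [hval, hj]
    have := add_right_cancel this
    rw [this]
  · exact absurd H (hmix i c')
  · exact absurd (fun w => (H w).symm) (hmix j c)
  · have h0 := H []
    have h4 := H [4]
    have h04 := H [0, 4]
    fin_cases c <;> fin_cases c' <;> first
      | rfl
      | (exfalso; simp [NQ, DFA.evalFrom, Ls, oL, eL, extO, extE] at h0 h4 h04)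

end Construction

/-- For each `n ≥ 5` there is a minimal DFA with `n` states
over an alphabet of size `5` whose transition semigroup has at least
`(n-4)^(n-4)` pairwise distinct `J`-classes, and likewise at least
`(n-4)^(n-4)` `R`-classes and `L`-classes (witnessed by families of pairwise
non-equivalent elements). -/
theorem many_classes_minimal_automaton (n : ℕ) (hn : 5 ≤ n) :
    ∃ M : DFA (Fin 5) (Fin n), M.IsMinimal ∧
      (∃ f : Fin ((n - 4) ^ (n - 4)) → ↥(transitionSemigroup M),
        ∀ i j, eqvJ (f i) (f j) → i = j) ∧
      (∃ f : Fin ((n - 4) ^ (n - 4)) → ↥(transitionSemigroup M),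
        ∀ i j, eqvR (f i) (f j) → i = j) ∧
      (∃ f : Fin ((n - 4) ^ (n - 4)) → ↥(transitionSemigroup M),
        ∀ i j, eqvL (f i) (f j) → i = j)  := by
  classical
  set m := n - 4 with hm
  haveI : NeZero m := ⟨by omega⟩
  have hn4 : n = m + 4 := by omega
  let ee : Fin n ≃ (Fin m ⊕ Fin 4) := (finCongr hn4).trans finSumFinEquiv.symm
  let M : DFA (Fin 5) (Fin n) :=
    { step := fun x a => ee.symm (Ls a (ee x))
      start := ee.symm (.inr 2)
      accept := {x | ee x ∈ (NQ m).accept} }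
  have hstep : ∀ (x : Fin n) (a : Fin 5), M.step x a = ee.symm (Ls a (ee x)) := fun _ _ => rfl
  have hconj : ∀ (w : List (Fin 5)) (q : Fin m ⊕ Fin 4),
      M.evalFrom (ee.symm q) w = ee.symm ((NQ m).evalFrom q w) := by
    intro w
    induction w with
    | nil => intro q; rfl
    | cons a w ih =>
        intro q
        have h1 : M.evalFrom (ee.symm q) (a :: w) = M.evalFrom (M.step (ee.symm q) a) w := rfl
        have h2 : (NQ m).evalFrom q (a :: w) = (NQ m).evalFrom ((NQ m).step q a) w := rfl
        rw [h1, h2, hstep, Equiv.apply_symm_apply]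
        exact ih ((NQ m).step q a)
  -- the conjugation homomorphism
  let ψ : Transf (Fin m ⊕ Fin 4) →ₙ* Transf (Fin n) :=
    { toFun := fun f x => ee.symm (f (ee x))
      map_mul' := by
        intro f g
        funext x
        show ee.symm (g (f (ee x))) = ee.symm (g (ee (ee.symm (f (ee x)))))
        rw [Equiv.apply_symm_apply] }
  have hψinj : Function.Injective ψ := by
    intro f g hfg
    funext q
    have := congrFun hfg (ee.symm q)
    change ee.symm (f (ee (ee.symm q))) = ee.symm (g (ee (ee.symm q))) at this
    simp only [ψ, MulHom.coe_mk, Equiv.apply_symm_apply] at this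
    exact ee.symm.injective this
  have hTS : transitionSemigroup M
      = Subsemigroup.map ψ (Subsemigroup.closure (Set.range (Ls (m := m)))) := by
    rw [transitionSemigroup, MulHom.map_mclosure]
    congr 1
    ext f
    constructor
    · rintro ⟨a, rfl⟩
      exact ⟨Ls a, ⟨a, rfl⟩, rfl⟩
    · rintro ⟨g, ⟨a, rfl⟩, rfl⟩
      exact ⟨a, rfl⟩
  -- minimality
  have hmin : M.IsMinimal := by
    constructor
    · intro q
      obtain ⟨w, hw⟩ := NQ_reach (m := m) (ee q)
      refine ⟨w, ?_⟩
      have : M.start = ee.symm (.inr 2) := rfl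
      rw [this]
      have h2 : ((NQ m).start : Fin m ⊕ Fin 4) = .inr 2 := rfl
      rw [show ((.inr 2 : Fin m ⊕ Fin 4)) = (NQ m).start from rfl, hconj, hw,
        Equiv.symm_apply_apply]
    · intro p q h
      have hsep := NQ_sep (m := m) (ee p) (ee q) ?_
      · exact ee.injective hsep
      · intro w
        have hp := hconj w (ee p)
        have hq := hconj w (ee q)
        rw [Equiv.symm_apply_apply] at hp hq
        have := h w
        rw [hp, hq] at this
        change ee (ee.symm ((NQ m).evalFrom (ee p) w)) ∈ (NQ m).accept ↔ ee (ee.symm ((NQ m).evalFrom (ee q) w)) ∈ (NQ m).accept at this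
        simpa only [Set.mem_setOf_eq, Equiv.apply_symm_apply] using this
  -- the family of elements
  have hcardfun : Fintype.card (Fin m → Fin m) = (n - 4) ^ (n - 4) := by
    rw [Fintype.card_fun, Fintype.card_fin]
  let E : (Fin m → Fin m) ≃ Fin ((n - 4) ^ (n - 4)) := Fintype.equivFinOfCardEq hcardfun
  have hmemF : ∀ g : Fin m → Fin m, ψ (sfun g) ∈ transitionSemigroup M := by
    intro g
    rw [hTS]
    exact ⟨sfun g, sfun_mem g, rfl⟩
  let F : Fin ((n - 4) ^ (n - 4)) → ↥(transitionSemigroup M) :=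
    fun i => ⟨ψ (sfun (E.symm i)), hmemF _⟩
  -- extraction of Q-level representatives
  have hrep : ∀ u : ↥(transitionSemigroup M),
      ∃ v ∈ Subsemigroup.closure (Set.range (Ls (m := m))), ψ v = (u : Transf (Fin n)) := by
    intro u
    have hu : (u : Transf (Fin n)) ∈ Subsemigroup.map ψ
        (Subsemigroup.closure (Set.range (Ls (m := m)))) := by
      rw [← hTS]; exact u.2
    exact Subsemigroup.mem_map.mp hu
  -- the key rigidity argument
  have key : ∀ (g h : Fin m → Fin m) (z₁ z₂ : WithOne ↥(transitionSemigroup M)),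
      ((⟨ψ (sfun g), hmemF g⟩ : ↥(transitionSemigroup M)) : WithOne ↥(transitionSemigroup M))
        = z₁ * ((⟨ψ (sfun h), hmemF h⟩ : ↥(transitionSemigroup M))
          : WithOne ↥(transitionSemigroup M)) * z₂ → g = h := by
    intro g h z₁ z₂ hz
    by_cases h1 : z₁ = 1
    · by_cases h2 : z₂ = 1
      · rw [h1, h2, one_mul, mul_one, WithOne.coe_inj] at hz
        have := congrArg Subtype.val hz
        exact sfun_inj (hψinj this)
      · obtain ⟨v, rfl⟩ := WithOne.ne_one_iff_exists.mp h2
        rw [h1, one_mul, ← WithOne.coe_mul, WithOne.coe_inj] at hz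
        have hveq := congrArg Subtype.val hz
        rw [MulMemClass.coe_mul] at hveq
        obtain ⟨v₀, hv₀mem, hv₀⟩ := hrep v
        rw [← hv₀, ← map_mul] at hveq
        have := hψinj hveq
        exact absurd this.symm (rigidB (isInv_closure hv₀mem) h g)
    · obtain ⟨u, rfl⟩ := WithOne.ne_one_iff_exists.mp h1
      by_cases h2 : z₂ = 1
      · rw [h2, mul_one, ← WithOne.coe_mul, WithOne.coe_inj] at hz
        have hveq := congrArg Subtype.val hz
        rw [MulMemClass.coe_mul] at hveq
        obtain ⟨u₀, hu₀mem, hu₀⟩ := hrep u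
        rw [← hu₀, ← map_mul] at hveq
        have := hψinj hveq
        exact absurd this.symm (rigidA (isInv_closure hu₀mem) h g)
      · obtain ⟨v, rfl⟩ := WithOne.ne_one_iff_exists.mp h2
        rw [← WithOne.coe_mul, ← WithOne.coe_mul, WithOne.coe_inj] at hz
        have hveq := congrArg Subtype.val hz
        rw [MulMemClass.coe_mul, MulMemClass.coe_mul] at hveq
        obtain ⟨u₀, hu₀mem, hu₀⟩ := hrep u
        obtain ⟨v₀, hv₀mem, hv₀⟩ := hrep v
        rw [← hu₀, ← hv₀, ← map_mul, ← map_mul] at hveq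
        have := hψinj hveq
        exact absurd this.symm (rigidC (isInv_closure hu₀mem) (isInv_closure hv₀mem) h g)
  have keyF : ∀ (i j : Fin ((n - 4) ^ (n - 4))) (z₁ z₂ : WithOne ↥(transitionSemigroup M)),
      ((F i : ↥(transitionSemigroup M)) : WithOne ↥(transitionSemigroup M))
        = z₁ * ((F j : ↥(transitionSemigroup M)) : WithOne ↥(transitionSemigroup M)) * z₂
        → i = j := by
    intro i j z₁ z₂ hz
    have := key (E.symm i) (E.symm j) z₁ z₂ hz
    exact E.symm.injective this
  refine ⟨M, hmin, ⟨F, ?_⟩, ⟨F, ?_⟩, ⟨F, ?_⟩⟩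
  · intro i j hij
    have hmemJ : ((F i : ↥(transitionSemigroup M)) : WithOne ↥(transitionSemigroup M))
        ∈ jIdeal (F i) := ⟨1, 1, by rw [one_mul, mul_one]⟩
    obtain ⟨z₁, z₂, hz⟩ := hij.1 hmemJ
    exact keyF i j z₁ z₂ hz
  · intro i j hij
    have hmemR : ((F i : ↥(transitionSemigroup M)) : WithOne ↥(transitionSemigroup M))
        ∈ rIdeal (F i) := ⟨1, (mul_one _).symm⟩
    obtain ⟨z, hz⟩ := hij.1 hmemR
    refine keyF i j 1 z ?_
    rw [one_mul]; exact hz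
  · intro i j hij
    have hmemL : ((F i : ↥(transitionSemigroup M)) : WithOne ↥(transitionSemigroup M))
        ∈ lIdeal (F i) := ⟨1, (one_mul _).symm⟩
    obtain ⟨z, hz⟩ := hij.1 hmemL
    refine keyF i j z 1 ?_
    rw [mul_one]; exact hz
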